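/- arXiv:1604.07329 — 6 statements merged into one kernel-verified Lean document; each statement's English description precedes it below -/
import Mathlib

section
/- Let a > 0 and g : ℝ → ℝ affine with g > 0 on [0, a], f = g/2, D̄ = {(x, y) : 0 ≤ x ≤ a, 0 ≤ y ≤ g(x)}, q = a + sup g([0, a]). Define H : [0, q] × D̄ → ℝ² by H(t, (x, y)) = (t, min{y, f(t)}) if t < x, and H(t, (x, y)) = (x, min{y, t − x + f(x)}) if t ≥ x. Then H maps into D̄, is continuous, and is a strong deformation retraction of D̄ onto the segment {0} × [0, g(0)/2]: H(0, (x, y)) ∈ {0} × [0, g(0)/2] for all (x, y), H(t, (0, y)) = (0, y) whenever 0 ≤ y ≤ g(0)/2, and H(q, (x, y)) = (x, y). -/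
/-- Case (III) canonical retraction: strong deformation retraction of the closed cell
`D̄` onto the closed half-segment `{0} × [0, g 0 / 2]`. -/
theorem stmt_3 (a : ℝ) (ha : 0 < a) (g : ℝ → ℝ) (lam cg : ℝ)
    (hg : ∀ x, g x = lam * x + cg) (hgpos : ∀ x ∈ Set.Icc 0 a, 0 < g x) :
    let f : ℝ → ℝ := fun x => g x / 2
    let Dbar : Set (ℝ × ℝ) := {p | 0 ≤ p.1 ∧ p.1 ≤ a ∧ 0 ≤ p.2 ∧ p.2 ≤ g p.1}
    let q : ℝ := a + sSup (g '' Set.Icc 0 a)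
    let H : ℝ → ℝ × ℝ → ℝ × ℝ := fun t p =>
      if t < p.1 then (t, min p.2 (f t))
      else (p.1, min p.2 (t - p.1 + f p.1))
    Set.MapsTo (fun z : ℝ × (ℝ × ℝ) => H z.1 z.2) (Set.Icc 0 q ×ˢ Dbar) Dbar ∧
    ContinuousOn (fun z : ℝ × (ℝ × ℝ) => H z.1 z.2) (Set.Icc 0 q ×ˢ Dbar) ∧
    (∀ p ∈ Dbar, H 0 p ∈ ({0} : Set ℝ) ×ˢ Set.Icc 0 (g 0 / 2)) ∧
    (∀ t ∈ Set.Icc 0 q, ∀ y ∈ Set.Icc 0 (g 0 / 2), H t (0, y) = (0, y)) ∧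
    (∀ p ∈ Dbar, H q p = p) := by
  intro f Dbar q H
  have hgc : Continuous g := by
    have : g = fun x => lam * x + cg := funext hg
    rw [this]; continuity
  have hS : ∀ x ∈ Set.Icc (0:ℝ) a, g x ≤ sSup (g '' Set.Icc 0 a) := fun x hx =>
    le_csSup (isCompact_Icc.image hgc).bddAbove ⟨x, hx, rfl⟩
  have hg0 : 0 < g 0 := hgpos 0 ⟨le_refl 0, ha.le⟩
  refine ⟨?_, ?_, ?_, ?_, ?_⟩
  · rintro ⟨t, x, y⟩ ⟨⟨ht0, htq⟩, hx0, hxa, hy0, hyg⟩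
    simp only [H, Set.mem_setOf_eq]
    split_ifs with h
    · have hta : t ≤ a := le_trans h.le hxa
      have hft : 0 < g t := hgpos t ⟨ht0, hta⟩
      refine ⟨ht0, hta, le_min hy0 (by simp only [f]; linarith), ?_⟩
      have : min y (f t) ≤ f t := min_le_right _ _
      simp only [f] at this ⊢; linarith
    · have hfx : 0 < g x := hgpos x ⟨hx0, hxa⟩
      push_neg at h
      exact ⟨hx0, hxa, le_min hy0 (by simp only [f]; linarith),
        le_trans (min_le_left _ _) hyg⟩
  · have hEq : (fun z : ℝ × (ℝ × ℝ) => H z.1 z.2) =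
        fun z : ℝ × (ℝ × ℝ) =>
          (min z.1 z.2.1, min z.2.2 (f (min z.1 z.2.1) + max (z.1 - z.2.1) 0)) := by
      funext z
      simp only [H]
      rcases lt_or_ge z.1 z.2.1 with h | h
      · rw [if_pos h, min_eq_left h.le, max_eq_right (by linarith), add_zero]
      · rw [if_neg (not_lt.mpr h), min_eq_right h, max_eq_left (by linarith)]
        refine Prod.ext rfl ?_
        simp only; congr 1; ring
    rw [hEq]
    apply Continuous.continuousOn
    have hf : Continuous f := by simp only [f]; exact hgc.div_const 2
    fun_prop
  · rintro ⟨x, y⟩ ⟨hx0, hxa, hy0, hyg⟩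
    simp only [H]
    have hf0 : 0 < f 0 := by simp only [f]; linarith
    split_ifs with h
    · exact ⟨rfl, le_min hy0 hf0.le, min_le_right _ _⟩
    · push_neg at h
      have hx : x = 0 := le_antisymm h hx0
      subst hx
      refine ⟨rfl, le_min hy0 (by simp only [f]; linarith), ?_⟩
      have : min y (0 - 0 + f 0) ≤ 0 - 0 + f 0 := min_le_right _ _
      simp only [f] at this ⊢; linarith
  · rintro t ⟨ht0, htq⟩ y ⟨hy0, hyg⟩
    simp only [H, if_neg (not_lt.mpr ht0)]
    refine Prod.ext rfl ?_
    simp only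
    apply min_eq_left
    simp only [f]; linarith
  · rintro ⟨x, y⟩ ⟨hx0, hxa, hy0, hyg⟩
    have hSx := hS x ⟨hx0, hxa⟩
    have hfx : 0 < g x := hgpos x ⟨hx0, hxa⟩
    have hq : ¬ q < x := by simp only [q]; push_neg; linarith
    simp only [H, if_neg hq]
    refine Prod.ext rfl ?_
    simp only
    apply min_eq_left
    simp only [q, f]; linarith
end

section
/- With the notation of the previous statement (a > 0, g affine positive on [0, a], f = g/2, q = a + sup g([0, a]), and H(t, (x, y)) = (t, min{y, f(t)}) for t < x, H(t, (x, y)) = (x, min{y, t − x + f(x)}) for t ≥ x), let C = {0} × (0, g(0)) and D = {(x, y) : 0 < x < a, 0 < y < g(x)}. Then for every t ∈ [0, q] and every (x, y) ∈ C ∪ D, the point H(t, (x, y)) lies in C ∪ D. Consequently, the restriction of H is a strong deformation retraction of C ∪ D onto the half-open segment {0} × (0, g(0)/2]. -/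
/-- The Case (III) canonical retraction preserves `C ∪ D` and restricts to a strong
deformation retraction of `C ∪ D` onto the half-open segment `{0} × (0, g 0 / 2]`. -/
theorem stmt_4 (a : ℝ) (ha : 0 < a) (g : ℝ → ℝ) (lam cg : ℝ)
    (hg : ∀ x, g x = lam * x + cg) (hgpos : ∀ x ∈ Set.Icc 0 a, 0 < g x) :
    let f : ℝ → ℝ := fun x => g x / 2
    let C : Set (ℝ × ℝ) := {p | p.1 = 0 ∧ 0 < p.2 ∧ p.2 < g 0}
    let D : Set (ℝ × ℝ) := {p | 0 < p.1 ∧ p.1 < a ∧ 0 < p.2 ∧ p.2 < g p.1}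
    let q : ℝ := a + sSup (g '' Set.Icc 0 a)
    let H : ℝ → ℝ × ℝ → ℝ × ℝ := fun t p =>
      if t < p.1 then (t, min p.2 (f t))
      else (p.1, min p.2 (t - p.1 + f p.1))
    (∀ t ∈ Set.Icc 0 q, ∀ p ∈ C ∪ D, H t p ∈ C ∪ D) ∧
    ContinuousOn (fun z : ℝ × (ℝ × ℝ) => H z.1 z.2) (Set.Icc 0 q ×ˢ (C ∪ D)) ∧
    (∀ p ∈ C ∪ D, H 0 p ∈ ({0} : Set ℝ) ×ˢ Set.Ioc 0 (g 0 / 2)) ∧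
    (∀ t ∈ Set.Icc 0 q, ∀ y ∈ Set.Ioc 0 (g 0 / 2), H t (0, y) = (0, y)) ∧
    (∀ p ∈ C ∪ D, H q p = p) := by
  intro f C D q H
  have hgc : Continuous g := by
    have hgeq : g = fun x => lam * x + cg := funext hg
    rw [hgeq]; fun_prop
  have hg0 : 0 < g 0 := hgpos 0 ⟨le_refl 0, ha.le⟩
  have hsup : ∀ x ∈ Set.Icc (0:ℝ) a, g x ≤ sSup (g '' Set.Icc 0 a) := by
    intro x hx
    exact le_csSup (isCompact_Icc.image hgc).bddAbove (Set.mem_image_of_mem g hx)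
  refine ⟨?_, ?_, ?_, ?_, ?_⟩
  · -- preservation
    intro t ht p hp
    rcases hp with hC | hD
    · obtain ⟨hx0, hy0, hyg⟩ := hC
      have hnt : ¬ t < p.1 := by rw [hx0]; exact not_lt.2 ht.1
      left
      show (H t p).1 = 0 ∧ 0 < (H t p).2 ∧ (H t p).2 < g (0:ℝ)
      simp only [H, if_neg hnt]
      refine ⟨hx0, lt_min hy0 ?_, lt_of_le_of_lt (min_le_left _ _) hyg⟩
      have : (0:ℝ) ≤ t - p.1 := by rw [hx0]; linarith [ht.1]
      have : 0 < f p.1 := by rw [hx0]; simp only [f]; linarith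
      simp only [f] at *
      linarith
    · obtain ⟨hx0, hxa, hy0, hyg⟩ := hD
      by_cases htx : t < p.1
      · have hta : t < a := htx.trans hxa
        have hgt : 0 < g t := hgpos t ⟨ht.1, hta.le⟩
        rcases eq_or_lt_of_le ht.1 with h0t | h0t
        · left
          show (H t p).1 = 0 ∧ 0 < (H t p).2 ∧ (H t p).2 < g (0:ℝ)
          simp only [H, if_pos htx]
          refine ⟨h0t.symm, lt_min hy0 (by simp only [f]; linarith), ?_⟩
          have : min p.2 (f t) ≤ f t := min_le_right _ _
          simp only [f] at this ⊢
          rw [← h0t] at *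
          linarith
        · right
          show 0 < (H t p).1 ∧ (H t p).1 < a ∧ 0 < (H t p).2 ∧ (H t p).2 < g (H t p).1
          simp only [H, if_pos htx]
          refine ⟨h0t, hta, lt_min hy0 (by simp only [f]; linarith), ?_⟩
          have : min p.2 (f t) ≤ f t := min_le_right _ _
          simp only [f] at this ⊢
          linarith
      · right
        show 0 < (H t p).1 ∧ (H t p).1 < a ∧ 0 < (H t p).2 ∧ (H t p).2 < g (H t p).1
        simp only [H, if_neg htx]
        have hgx : 0 < g p.1 := hgpos p.1 ⟨hx0.le, hxa.le⟩
        have htx' : p.1 ≤ t := not_lt.1 htx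
        refine ⟨hx0, hxa, lt_min hy0 ?_, lt_of_le_of_lt (min_le_left _ _) hyg⟩
        simp only [f]; linarith
  · -- continuity
    apply Continuous.continuousOn
    have heq : (fun z : ℝ × (ℝ × ℝ) => H z.1 z.2) =
        fun z : ℝ × (ℝ × ℝ) => if z.2.1 ≤ z.1 then (z.2.1, min z.2.2 (z.1 - z.2.1 + f z.2.1))
          else (z.1, min z.2.2 (f z.1)) := by
      funext z
      simp only [H]
      rcases lt_or_ge z.1 z.2.1 with h | h
      · rw [if_pos h, if_neg (not_le.2 h)]
      · rw [if_neg (not_lt.2 h), if_pos h]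
    rw [heq]
    apply Continuous.if_le
    · fun_prop
    · fun_prop
    · fun_prop
    · fun_prop
    · intro z hz
      simp only [hz]
      ring_nf
  · -- H 0 into the segment
    intro p hp
    rw [Set.mem_prod, Set.mem_singleton_iff, Set.mem_Ioc]
    rcases hp with hC | hD
    · obtain ⟨hx0, hy0, hyg⟩ := hC
      have hnt : ¬ (0:ℝ) < p.1 := by rw [hx0]; exact lt_irrefl 0
      have h1 : H 0 p = (p.1, min p.2 (0 - p.1 + f p.1)) := by
        simp only [H, if_neg hnt]
      rw [h1]
      refine ⟨hx0, lt_min hy0 ?_, ?_⟩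
      · simp only [f, hx0]; linarith
      · have := min_le_right p.2 ((0:ℝ) - p.1 + f p.1)
        simp only [f, hx0] at this ⊢
        linarith
    · obtain ⟨hx0, hxa, hy0, hyg⟩ := hD
      have h1 : H 0 p = (0, min p.2 (f 0)) := by
        simp only [H, if_pos hx0]
      rw [h1]
      exact ⟨rfl, lt_min hy0 (by simp only [f]; linarith), min_le_right _ _⟩
  · -- fixed on the segment
    intro t ht y hy
    have hnt : ¬ t < (0:ℝ) := not_lt.2 ht.1
    simp only [H, if_neg hnt]
    have : min y (t - 0 + f 0) = y := by
      apply min_eq_left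
      simp only [f]
      have := hy.2
      linarith [ht.1]
    rw [this]
  · -- H q = id
    intro p hp
    have hsg0 : g 0 ≤ sSup (g '' Set.Icc 0 a) := hsup 0 ⟨le_refl 0, ha.le⟩
    rcases hp with hC | hD
    · obtain ⟨hx0, hy0, hyg⟩ := hC
      have hnt : ¬ q < p.1 := by
        rw [hx0]; simp only [q]; push_neg; linarith
      simp only [H, if_neg hnt]
      have : min p.2 (q - p.1 + f p.1) = p.2 := by
        apply min_eq_left
        simp only [q, f, hx0] at *
        linarith
      rw [this]
    · obtain ⟨hx0, hxa, hy0, hyg⟩ := hD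
      have hsgx : g p.1 ≤ sSup (g '' Set.Icc 0 a) := hsup p.1 ⟨hx0.le, hxa.le⟩
      have hgx : 0 < g p.1 := hgpos p.1 ⟨hx0.le, hxa.le⟩
      have hnt : ¬ q < p.1 := by
        simp only [q]; push_neg; linarith
      simp only [H, if_neg hnt]
      have : min p.2 (q - p.1 + f p.1) = p.2 := by
        apply min_eq_left
        simp only [q, f] at *
        linarith
      rw [this]
end

section
/- Let g : ℝ → ℝ be affine with g > 0 on [0, a], f = g/2, and define H on [0, q] × D̄ as in Case II: H(t, (x, y)) = (t, min{y, t, f(t)}) for t < x and H(t, (x, y)) = (x, min{y, t, t − x + f(x)}) for t ≥ x, where D̄ = {(x, y) : 0 ≤ x ≤ a, 0 ≤ y ≤ g(x)} and q = a + sup g([0, a]). Then for every (x, y) ∈ D̄, one has H(t, (x, y)) = (x, y) if and only if t ≥ max{x, y, x + y − g(x)/2}. -/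
/-- Fixing points of the Case (II) canonical retraction: a point `(x,y)` of the closed
cell is fixed by `H(t,·)` exactly when `t ≥ max{x, y, x + y - g x / 2}`. -/
theorem stmt_5 (a : ℝ) (ha : 0 < a) (g : ℝ → ℝ) (lam cg : ℝ)
    (hg : ∀ x, g x = lam * x + cg) (hgpos : ∀ x ∈ Set.Icc 0 a, 0 < g x) :
    let f : ℝ → ℝ := fun x => g x / 2
    let Dbar : Set (ℝ × ℝ) := {p | 0 ≤ p.1 ∧ p.1 ≤ a ∧ 0 ≤ p.2 ∧ p.2 ≤ g p.1}
    let q : ℝ := a + sSup (g '' Set.Icc 0 a)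
    let H : ℝ → ℝ × ℝ → ℝ × ℝ := fun t p =>
      if t < p.1 then (t, min p.2 (min t (f t)))
      else (p.1, min p.2 (min t (t - p.1 + f p.1)))
    ∀ t ∈ Set.Icc 0 q, ∀ p ∈ Dbar,
      (H t p = p ↔ max p.1 (max p.2 (p.1 + p.2 - g p.1 / 2)) ≤ t) := by
  intro f Dbar q H t ht p hp
  obtain ⟨x, y⟩ := p
  simp only [H, f, Dbar, Set.mem_setOf_eq] at *
  constructor
  · intro h
    by_cases hc : t < x
    · exfalso
      rw [if_pos hc] at h
      have := congrArg Prod.fst h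
      simp at this
      exact absurd this (ne_of_lt hc)
    · rw [if_neg hc] at h
      push_neg at hc
      have h2 := congrArg Prod.snd h
      simp only [Prod.snd] at h2
      have hy : y ≤ min t (t - x + g x / 2) := by
        by_contra hlt
        push_neg at hlt
        rw [min_eq_right hlt.le] at h2
        exact absurd h2.symm.le (not_le.mpr hlt)
      simp only [le_min_iff] at hy
      simp only [max_le_iff]
      exact ⟨hc, hy.1, by linarith [hy.2]⟩
  · intro h
    simp only [max_le_iff] at h
    obtain ⟨hx, hy, hxy⟩ := h
    rw [if_neg (not_lt.mpr hx)]
    have : min y (min t (t - x + g x / 2)) = y := by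
      rw [min_eq_left]
      exact le_min hy (by linarith)
    rw [this]
end

section
/- Let A ⊆ ℝⁿ, c ∈ A, and H₁ : [0, q₁] × A → A a strong deformation retraction of A onto {c}. Let F : A → ℝ be a continuous bounded function with F(x) > 0 for all x ∈ A, and set C' = {(x, y) ∈ A × ℝ : 0 < y ≤ F(x)} and q = q₁ + sup F(A). Define H : [0, q] × C' → ℝⁿ⁺¹ by H(t, (x, y)) = (H₁(t, x), F(H₁(t, x))) if t < q₁, and H(t, (x, y)) = (x, max{F(x) − (t − q₁), y}) if t ≥ q₁. Then H maps into C', is continuous, and is a strong deformation retraction of C' onto the point (c, F(c)). -/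
/-- Recursive step of the contractibility of half-cells: from a contraction of `A` to
`c` one builds a strong deformation retraction of `C' = {(x,y) : x ∈ A, 0 < y ≤ F x}`
onto the point `(c, F c)`. -/
theorem stmt_10 (n : ℕ) (A : Set (Fin n → ℝ)) (c : Fin n → ℝ) (hc : c ∈ A)
    (q₁ : ℝ) (hq₁ : 0 ≤ q₁) (H₁ : ℝ × (Fin n → ℝ) → (Fin n → ℝ))
    (hmaps₁ : Set.MapsTo H₁ (Set.Icc 0 q₁ ×ˢ A) A)
    (hcont₁ : ContinuousOn H₁ (Set.Icc 0 q₁ ×ˢ A))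
    (h₁0 : ∀ x ∈ A, H₁ (0, x) = c)
    (h₁fix : ∀ t ∈ Set.Icc 0 q₁, H₁ (t, c) = c)
    (h₁q : ∀ x ∈ A, H₁ (q₁, x) = x)
    (F : (Fin n → ℝ) → ℝ) (hFcont : ContinuousOn F A)
    (hFpos : ∀ x ∈ A, 0 < F x) (hFbdd : BddAbove (F '' A)) :
    let C' : Set ((Fin n → ℝ) × ℝ) := {p | p.1 ∈ A ∧ 0 < p.2 ∧ p.2 ≤ F p.1}
    let q : ℝ := q₁ + sSup (F '' A)
    let H : ℝ × ((Fin n → ℝ) × ℝ) → (Fin n → ℝ) × ℝ := fun z =>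
      if z.1 < q₁ then (H₁ (z.1, z.2.1), F (H₁ (z.1, z.2.1)))
      else (z.2.1, max (F z.2.1 - (z.1 - q₁)) z.2.2)
    Set.MapsTo H (Set.Icc 0 q ×ˢ C') C' ∧
    ContinuousOn H (Set.Icc 0 q ×ˢ C') ∧
    (∀ p ∈ C', H (0, p) = (c, F c)) ∧
    (∀ t ∈ Set.Icc 0 q, H (t, (c, F c)) = (c, F c)) ∧
    (∀ p ∈ C', H (q, p) = p) := by
  intro C' q H
  have hFle : ∀ x ∈ A, F x ≤ sSup (F '' A) := fun x hx => le_csSup hFbdd ⟨x, hx, rfl⟩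
  have hMpos : 0 < sSup (F '' A) := lt_of_lt_of_le (hFpos c hc) (hFle c hc)
  have hqq : q₁ < q := by simp only [q]; linarith
  refine ⟨?_, ?_, ?_, ?_, ?_⟩
  · -- MapsTo
    rintro ⟨t, x, y⟩ ⟨ht, hx, hy0, hyF⟩
    by_cases h : t < q₁
    · have htq : t ∈ Set.Icc 0 q₁ := ⟨ht.1, le_of_lt h⟩
      have hH : H₁ (t, x) ∈ A := hmaps₁ ⟨htq, hx⟩
      show (if t < q₁ then _ else _) ∈ C'
      rw [if_pos h]
      exact ⟨hH, hFpos _ hH, le_refl _⟩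
    · show (if t < q₁ then _ else _) ∈ C'
      rw [if_neg h]
      push_neg at h
      exact ⟨hx, lt_of_lt_of_le hy0 (le_max_right _ _),
        max_le (by linarith) hyF⟩
  · -- Continuity
    have hg2 : ContinuousOn (fun z : ℝ × ((Fin n → ℝ) × ℝ) =>
        ((z.2.1, max (F z.2.1 - (z.1 - q₁)) z.2.2) : (Fin n → ℝ) × ℝ))
        (Set.Icc 0 q ×ˢ C') := by
      apply ContinuousOn.prodMk
      · exact (continuous_fst.comp continuous_snd).continuousOn
      · apply ContinuousOn.sup
        · apply ContinuousOn.sub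
          · apply hFcont.comp (continuous_fst.comp continuous_snd).continuousOn
            rintro ⟨t, x, y⟩ ⟨ht, hx, -⟩
            exact hx
          · exact (continuous_fst.sub continuous_const).continuousOn
        · exact (continuous_snd.comp continuous_snd).continuousOn
    have hclos1 : closure {z : ℝ × ((Fin n → ℝ) × ℝ) | z.1 < q₁} ⊆ {z | z.1 ≤ q₁} :=
      closure_minimal (fun z hz => (le_of_lt hz : z.1 ≤ q₁))
        (isClosed_le continuous_fst continuous_const)
    have hg1 : ContinuousOn (fun z : ℝ × ((Fin n → ℝ) × ℝ) =>
        ((H₁ (z.1, z.2.1), F (H₁ (z.1, z.2.1))) : (Fin n → ℝ) × ℝ))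
        ((Set.Icc 0 q ×ˢ C') ∩ {z | z.1 ≤ q₁}) := by
      have hG : ContinuousOn (fun z : ℝ × ((Fin n → ℝ) × ℝ) => H₁ (z.1, z.2.1))
          ((Set.Icc 0 q ×ˢ C') ∩ {z | z.1 ≤ q₁}) := by
        apply hcont₁.comp (continuous_fst.prodMk
          (continuous_fst.comp continuous_snd)).continuousOn
        rintro ⟨t, x, y⟩ ⟨⟨ht, hx, -⟩, hle⟩
        exact ⟨⟨ht.1, hle⟩, hx⟩
      apply hG.prodMk
      apply hFcont.comp hG
      rintro ⟨t, x, y⟩ ⟨⟨ht, hx, -⟩, hle⟩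
      exact hmaps₁ ⟨⟨ht.1, hle⟩, hx⟩
    apply ContinuousOn.if
    · rintro ⟨t, x, y⟩ ⟨⟨ht, hx, hy0, hyF⟩, hfr⟩
      have h1 : t ≤ q₁ := hclos1 (frontier_subset_closure hfr)
      have h2 : q₁ ≤ t := by
        rw [frontier_eq_closure_inter_closure] at hfr
        have := hfr.2
        have hcl : closure {z : ℝ × ((Fin n → ℝ) × ℝ) | z.1 < q₁}ᶜ ⊆ {z | q₁ ≤ z.1} := by
          apply closure_minimal
          · intro z hz
            simpa using hz
          · exact isClosed_le continuous_const continuous_fst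
        exact hcl this
      have htq : t = q₁ := le_antisymm h1 h2
      dsimp only
      rw [htq, h₁q x hx, sub_self, sub_zero, max_eq_left hyF]
    · exact hg1.mono (Set.inter_subset_inter_right _ hclos1)
    · exact hg2.mono Set.inter_subset_left
  · -- H(0,p) = (c, F c)
    rintro ⟨x, y⟩ ⟨hx, hy0, hyF⟩
    show (if (0:ℝ) < q₁ then _ else _) = _
    rcases lt_or_eq_of_le hq₁ with h | h
    · rw [if_pos h, h₁0 x hx]
    · rw [if_neg (by rw [← h]; exact lt_irrefl 0)]
      have hxc : x = c := by rw [← h₁q x hx, ← h, h₁0 x hx]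
      subst hxc
      have : max (F x - ((0:ℝ) - q₁)) y = F x := by
        rw [← h]
        rw [sub_zero, sub_zero]
        exact max_eq_left hyF
      rw [this]
  · -- H(t, (c, Fc)) = (c, Fc)
    rintro t ⟨ht0, htq⟩
    show (if t < q₁ then _ else _) = _
    by_cases h : t < q₁
    · rw [if_pos h, h₁fix t ⟨ht0, le_of_lt h⟩]
    · rw [if_neg h]
      push_neg at h
      have : max (F c - (t - q₁)) (F c) = F c := max_eq_right (by linarith)
      rw [this]
  · -- H(q,p) = p
    rintro ⟨x, y⟩ ⟨hx, hy0, hyF⟩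
    show (if q < q₁ then _ else _) = _
    rw [if_neg (not_lt.mpr (le_of_lt hqq))]
    have hle : F x - (q - q₁) ≤ y := by
      have := hFle x hx
      simp only [q] at *
      linarith
    rw [max_eq_right hle]
end

section
/- Let X be a topological space, X₁, X₂ ⊆ X closed subsets with X = X₁ ∪ X₂, and A ⊆ X₁ ∩ X₂. Suppose 0 ≤ q₁ ≤ q₂ and Hᵢ : [0, qᵢ] × Xᵢ → Xᵢ (i = 1, 2) are strong deformation retractions of Xᵢ onto A such that: (a) H₂(t, x) = H₁(t, x) for all x ∈ X₁ ∩ X₂ and t ∈ [0, q₁], and (b) H₁(q₁, x) = x for x ∈ X₁ and H₂(t, x) = x for all x ∈ X₁ ∩ X₂ and t ∈ [q₁, q₂]. Then the map H : [0, q₂] × X → X defined by H(t, x) = H₁(min(t, q₁), x) for x ∈ X₁ and H(t, x) = H₂(t, x) for x ∈ X₂ is well-defined, continuous, and a strong deformation retraction of X onto A. -/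
open scoped Classical Topology

/-- Pasting lemma: a function continuous on two closed sets is continuous on their union. -/
lemma contOn_union_closed {X Y : Type*} [TopologicalSpace X] [TopologicalSpace Y]
    {s t : Set X} {f : X → Y} (hs : IsClosed s) (ht : IsClosed t)
    (hfs : ContinuousOn f s) (hft : ContinuousOn f t) : ContinuousOn f (s ∪ t) := by
  intro x hx
  have key : ∀ u : Set X, IsClosed u → ContinuousOn f u → ContinuousWithinAt f u x := by
    intro u hu hfu
    by_cases h : x ∈ u
    · exact hfu x h
    · have : 𝓝[u] x = ⊥ := by
        rw [← Filter.not_neBot, ← mem_closure_iff_nhdsWithin_neBot, hu.closure_eq]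
        exact h
      rw [ContinuousWithinAt, this]
      exact Filter.tendsto_bot
  exact (key s hs hfs).union (key t ht hft)

/-- Gluing two compatible strong deformation retractions along a closed cover. -/
theorem stmt_11 {X : Type*} [TopologicalSpace X]
    (X₁ X₂ : Set X) (hX₁ : IsClosed X₁) (hX₂ : IsClosed X₂)
    (hcover : X₁ ∪ X₂ = Set.univ)
    (A : Set X) (hA : A ⊆ X₁ ∩ X₂)
    (q₁ q₂ : ℝ) (hq₁ : 0 ≤ q₁) (hq₁₂ : q₁ ≤ q₂)
    (H₁ H₂ : ℝ × X → X)
    (hm₁ : Set.MapsTo H₁ (Set.Icc 0 q₁ ×ˢ X₁) X₁)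
    (hm₂ : Set.MapsTo H₂ (Set.Icc 0 q₂ ×ˢ X₂) X₂)
    (hc₁ : ContinuousOn H₁ (Set.Icc 0 q₁ ×ˢ X₁))
    (hc₂ : ContinuousOn H₂ (Set.Icc 0 q₂ ×ˢ X₂))
    (h₁0 : ∀ x ∈ X₁, H₁ (0, x) ∈ A) (h₂0 : ∀ x ∈ X₂, H₂ (0, x) ∈ A)
    (h₁A : ∀ t ∈ Set.Icc 0 q₁, ∀ a ∈ A, H₁ (t, a) = a)
    (h₂A : ∀ t ∈ Set.Icc 0 q₂, ∀ a ∈ A, H₂ (t, a) = a)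
    (h₁q : ∀ x ∈ X₁, H₁ (q₁, x) = x) (h₂q : ∀ x ∈ X₂, H₂ (q₂, x) = x)
    (hagree : ∀ t ∈ Set.Icc 0 q₁, ∀ x ∈ X₁ ∩ X₂, H₂ (t, x) = H₁ (t, x))
    (hlate : ∀ t ∈ Set.Icc q₁ q₂, ∀ x ∈ X₁ ∩ X₂, H₂ (t, x) = x) :
    let H : ℝ × X → X := fun z =>
      if z.2 ∈ X₁ then H₁ (min z.1 q₁, z.2) else H₂ z
    -- well-definedness: on the overlap the two formulas agree
    (∀ t ∈ Set.Icc 0 q₂, ∀ x ∈ X₁ ∩ X₂, H (t, x) = H₂ (t, x)) ∧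
    ContinuousOn H (Set.Icc 0 q₂ ×ˢ (Set.univ : Set X)) ∧
    -- strong deformation retraction of `X` onto `A`
    (∀ x : X, H (0, x) ∈ A) ∧
    (∀ t ∈ Set.Icc 0 q₂, ∀ a ∈ A, H (t, a) = a) ∧
    (∀ x : X, H (q₂, x) = x) := by
  intro H
  have hmem : ∀ x : X, x ∈ X₁ ∪ X₂ := by
    intro x; rw [hcover]; trivial
  -- well-definedness
  have hwd : ∀ t ∈ Set.Icc 0 q₂, ∀ x ∈ X₁ ∩ X₂, H (t, x) = H₂ (t, x) := by
    intro t ht x hx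
    show (if x ∈ X₁ then H₁ (min t q₁, x) else H₂ (t, x)) = H₂ (t, x)
    rw [if_pos hx.1]
    rcases le_or_gt t q₁ with h | h
    · rw [min_eq_left h, hagree t ⟨ht.1, h⟩ x hx]
    · rw [min_eq_right h.le, h₁q x hx.1, hlate t ⟨h.le, ht.2⟩ x hx]
  refine ⟨hwd, ?_, ?_, ?_, ?_⟩
  · -- continuity
    have hS : Set.Icc 0 q₂ ×ˢ (Set.univ : Set X)
        = (Set.Icc 0 q₂ ×ˢ X₁) ∪ (Set.Icc 0 q₂ ×ˢ X₂) := by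
      rw [← Set.prod_union, hcover]
    rw [hS]
    apply contOn_union_closed (isClosed_Icc.prod hX₁) (isClosed_Icc.prod hX₂)
    · -- on X₁: H agrees with H₁ ∘ (min · q₁, ·)
      have hcf : ContinuousOn (fun z : ℝ × X => H₁ (min z.1 q₁, z.2))
          (Set.Icc 0 q₂ ×ˢ X₁) := by
        apply hc₁.comp
          (((continuous_fst.min continuous_const).prodMk continuous_snd).continuousOn)
        rintro ⟨t, x⟩ ⟨ht, hx⟩
        exact ⟨⟨le_min ht.1 hq₁, min_le_right _ _⟩, hx⟩
      refine hcf.congr ?_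
      rintro ⟨t, x⟩ ⟨ht, hx⟩
      show (if x ∈ X₁ then H₁ (min t q₁, x) else H₂ (t, x)) = _
      rw [if_pos hx]
    · -- on X₂: H agrees with H₂
      refine hc₂.congr ?_
      rintro ⟨t, x⟩ ⟨ht, hx⟩
      by_cases h : x ∈ X₁
      · exact hwd t ht x ⟨h, hx⟩
      · show (if x ∈ X₁ then H₁ (min t q₁, x) else H₂ (t, x)) = H₂ (t, x)
        rw [if_neg h]
  · -- H(0, x) ∈ A
    intro x
    show (if x ∈ X₁ then H₁ (min 0 q₁, x) else H₂ (0, x)) ∈ A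
    by_cases h : x ∈ X₁
    · rw [if_pos h, min_eq_left hq₁]; exact h₁0 x h
    · rw [if_neg h]; exact h₂0 x ((hmem x).resolve_left h)
  · -- H fixes A
    intro t ht a ha
    show (if a ∈ X₁ then H₁ (min t q₁, a) else H₂ (t, a)) = a
    rw [if_pos (hA ha).1]
    exact h₁A _ ⟨le_min ht.1 hq₁, min_le_right _ _⟩ a ha
  · -- H(q₂, ·) = id
    intro x
    show (if x ∈ X₁ then H₁ (min q₂ q₁, x) else H₂ (q₂, x)) = x
    by_cases h : x ∈ X₁
    · rw [if_pos h, min_eq_right hq₁₂]; exact h₁q x h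
    · rw [if_neg h]; exact h₂q x ((hmem x).resolve_left h)
end

section
/- Let a > 0 and define the half-cell contraction data: C' = (0, a/2] ⊆ ℝ, with H : [0, a/2] × C' → C', H(t, x) = max(a/2 − t, x). Let F : [0, a/2] → ℝ be affine with F > 0 on (0, a/2], bounded above by M. Then the product construction H̃ : [0, a/2 + M] × E → E on E = {(x, y) : x ∈ (0, a/2], 0 < y ≤ F(x)}, defined by H̃(t, (x, y)) = (H(t, x), F(H(t, x))) for t < a/2 and H̃(t, (x, y)) = (x, max{F(x) − (t − a/2), y}) for t ≥ a/2, is a strong deformation retraction of E onto the point (a/2, F(a/2)). In particular, the two-dimensional half-cell E is contractible. -/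
/-- The two-dimensional half-cell `E = {(x,y) : x ∈ (0,a/2], 0 < y ≤ F x}` strongly
deformation retracts to the point `(a/2, F (a/2))`. -/
theorem stmt_13 (a : ℝ) (ha : 0 < a) (F : ℝ → ℝ) (lF cF : ℝ)
    (hF : ∀ x, F x = lF * x + cF)
    (hFpos : ∀ x ∈ Set.Ioc 0 (a / 2), 0 < F x)
    (M : ℝ) (hM : ∀ x ∈ Set.Ioc 0 (a / 2), F x ≤ M) :
    let Hhalf : ℝ → ℝ → ℝ := fun t x => max (a / 2 - t) x
    let E : Set (ℝ × ℝ) := {p | p.1 ∈ Set.Ioc 0 (a / 2) ∧ 0 < p.2 ∧ p.2 ≤ F p.1}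
    let q : ℝ := a / 2 + M
    let Ht : ℝ → ℝ × ℝ → ℝ × ℝ := fun t p =>
      if t < a / 2 then (Hhalf t p.1, F (Hhalf t p.1))
      else (p.1, max (F p.1 - (t - a / 2)) p.2)
    Set.MapsTo (fun z : ℝ × (ℝ × ℝ) => Ht z.1 z.2) (Set.Icc 0 q ×ˢ E) E ∧
    ContinuousOn (fun z : ℝ × (ℝ × ℝ) => Ht z.1 z.2) (Set.Icc 0 q ×ˢ E) ∧
    (∀ p ∈ E, Ht 0 p = (a / 2, F (a / 2))) ∧
    (∀ t ∈ Set.Icc 0 q, Ht t (a / 2, F (a / 2)) = (a / 2, F (a / 2))) ∧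
    (∀ p ∈ E, Ht q p = p) := by
  intro Hhalf E q Ht
  have hFc : Continuous F := by
    have : F = fun x => lF * x + cF := funext hF
    rw [this]; continuity
  have ha2 : 0 < a / 2 := by linarith
  refine ⟨?_, ?_, ?_, ?_, ?_⟩
  · -- MapsTo
    rintro ⟨t, x, y⟩ ⟨⟨ht0, htq⟩, ⟨⟨hx0, hxa⟩, hy0, hyF⟩⟩
    simp only [Ht]
    split_ifs with h
    · constructor
      · exact ⟨lt_of_lt_of_le hx0 (le_max_right _ _),
          max_le (by linarith) hxa⟩
      · refine ⟨hFpos _ ⟨lt_of_lt_of_le hx0 (le_max_right _ _),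
          max_le (by linarith) hxa⟩, le_refl _⟩
    · refine ⟨⟨hx0, hxa⟩, lt_max_of_lt_right hy0, max_le ?_ hyF⟩
      push_neg at h
      linarith
  · -- Continuity
    have key : Set.EqOn (fun z : ℝ × (ℝ × ℝ) => Ht z.1 z.2)
        (fun z : ℝ × (ℝ × ℝ) =>
          (max (a / 2 - min z.1 (a / 2)) z.2.1,
            max (F (max (a / 2 - min z.1 (a / 2)) z.2.1) - max (z.1 - a / 2) 0)
              (min z.2.2 (F (max (a / 2 - min z.1 (a / 2)) z.2.1)))))
        (Set.Icc 0 q ×ˢ E) := by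
      rintro ⟨t, x, y⟩ ⟨⟨ht0, htq⟩, ⟨⟨hx0, hxa⟩, hy0, hyF⟩⟩
      simp only [Ht, Hhalf]
      split_ifs with h
      · have h1 : min t (a / 2) = t := min_eq_left h.le
        rw [h1]
        have h2 : max (t - a / 2) 0 = 0 := max_eq_right (by linarith)
        rw [h2, sub_zero]
        have h3 : min y (F (max (a / 2 - t) x)) ≤ F (max (a / 2 - t) x) :=
          min_le_right _ _
        rw [max_eq_left h3]
      · push_neg at h
        have h1 : min t (a / 2) = a / 2 := min_eq_right h
        rw [h1, sub_self]
        have h2 : max (0 : ℝ) x = x := max_eq_right hx0.le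
        rw [h2]
        have h3 : max (t - a / 2) 0 = t - a / 2 := max_eq_left (by linarith)
        rw [h3, min_eq_left hyF]
    refine ContinuousOn.congr ?_ key
    apply Continuous.continuousOn
    fun_prop
  · -- t = 0
    rintro ⟨x, y⟩ ⟨⟨hx0, hxa⟩, hy0, hyF⟩
    simp only [Ht, Hhalf, if_pos ha2, sub_zero]
    rw [max_eq_left hxa]
  · -- fixed point
    rintro t ⟨ht0, htq⟩
    simp only [Ht, Hhalf]
    split_ifs with h
    · rw [max_eq_right (by linarith : a / 2 - t ≤ a / 2)]
    · push_neg at h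
      rw [max_eq_right (by linarith : F (a / 2) - (t - a / 2) ≤ F (a / 2))]
  · -- t = q
    rintro ⟨x, y⟩ ⟨⟨hx0, hxa⟩, hy0, hyF⟩
    have hMpos : 0 < M := lt_of_lt_of_le (hFpos _ ⟨hx0, hxa⟩) (hM _ ⟨hx0, hxa⟩)
    simp only [Ht, q]
    rw [if_neg (by push_neg; linarith)]
    have : F x - (a / 2 + M - a / 2) ≤ y := by
      have := hM x ⟨hx0, hxa⟩
      linarith
    rw [max_eq_right this]
end
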